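/- Let A ⊆ [0,1]^2 ⊆ ℝ^2 (Euclidean plane) be a set such that for any two distinct points x = (x_1,x_2) and y = (y_1,y_2) in A there exists a unique index i ∈ {1,2} with x_i = y_i. Then H^1(A) ≤ 1, where H^1 denotes the 1-dimensional Hausdorff measure. -/

import Mathlib

open MeasureTheory

lemma fin2_eq_of_ne : ∀ i j k : Fin 2, j ≠ i → k ≠ i → k = j := by decide

/-- If all points of `A ⊆ [0,1]²` share the `i`-th coordinate, then `A` lies in a unit
segment, so `H¹(A) ≤ 1`. -/
lemma aux_line (A : Set (EuclideanSpace ℝ (Fin 2)))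
    (hA : ∀ x ∈ A, ∀ i : Fin 2, x i ∈ Set.Icc (0 : ℝ) 1)
    (a : EuclideanSpace ℝ (Fin 2)) (i : Fin 2) (hi : ∀ x ∈ A, x i = a i) :
    μH[1] A ≤ 1 := by
  obtain ⟨j, hji⟩ : ∃ j : Fin 2, j ≠ i := ⟨1 - i, by fin_cases i <;> decide⟩
  obtain ⟨u, v, hu, hv⟩ :
      ∃ u v : EuclideanSpace ℝ (Fin 2),
        (∀ k, u k = if k = i then a i else 0) ∧ (∀ k, v k = if k = i then a i else 1) :=
    ⟨WithLp.toLp 2 (fun k => if k = i then a i else 0 : Fin 2 → ℝ),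
     WithLp.toLp 2 (fun k => if k = i then a i else 1 : Fin 2 → ℝ), fun _ => rfl, fun _ => rfl⟩
  have hsub : A ⊆ segment ℝ u v := by
    intro x hx
    rw [segment_eq_image]
    refine ⟨x j, ⟨(hA x hx j).1, (hA x hx j).2⟩, ?_⟩
    ext k
    simp only [PiLp.add_apply, PiLp.smul_apply, smul_eq_mul, hu k, hv k]
    by_cases hki : k = i
    · subst hki
      rw [if_pos rfl, if_pos rfl, hi x hx]
      ring
    · have hkj : k = j := fin2_eq_of_ne i j k hji hki
      subst hkj
      rw [if_neg hki, if_neg hki]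
      ring
  calc μH[1] A ≤ μH[1] (segment ℝ u v) := measure_mono hsub
    _ = edist u v := hausdorffMeasure_segment u v
    _ = 1 := by
        rw [edist_dist, EuclideanSpace.dist_eq]
        have hd : ∀ k, dist (u k) (v k) ^ 2 = if k = i then 0 else 1 := by
          intro k
          by_cases hki : k = i <;> simp [hu k, hv k, hki, Real.dist_eq]
        rw [Fin.sum_univ_two, hd 0, hd 1]
        fin_cases i <;> norm_num

/-- A `2`-de Bruijn–Erdős set `A ⊆ [0,1]² ⊆ ℝ²` (any two distinct points of `A` agree in
exactly one coordinate) satisfies `H¹(A) ≤ 1`. -/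
theorem stmt_9 (A : Set (EuclideanSpace ℝ (Fin 2)))
    (hA : ∀ x ∈ A, ∀ i : Fin 2, x i ∈ Set.Icc (0 : ℝ) 1)
    (hdBE : ∀ x ∈ A, ∀ y ∈ A, x ≠ y → ∃! i : Fin 2, x i = y i) :
    μH[1] A ≤ 1 := by
  rcases A.eq_empty_or_nonempty with h | ⟨a, ha⟩
  · simp [h]
  have key : ∃ i : Fin 2, ∀ x ∈ A, x i = a i := by
    by_cases hb : ∃ b ∈ A, b ≠ a
    · obtain ⟨b, hbA, hba⟩ := hb
      obtain ⟨i, hiab, hiu⟩ := hdBE a ha b hbA (Ne.symm hba)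
      refine ⟨i, fun x hx => ?_⟩
      by_cases hxa : x = a
      · rw [hxa]
      obtain ⟨j, hjx, hju⟩ := hdBE x hx a ha hxa
      by_cases hji : j = i
      · rw [← hji]; exact hjx
      by_cases hxb : x = b
      · rw [hxb]; exact hiab.symm
      obtain ⟨k, hkx, hku⟩ := hdBE x hx b hbA hxb
      by_cases hki : k = i
      · rw [← hki, hkx, hki, ← hiab]
      · have hkj : k = j := fin2_eq_of_ne i j k hji hki
        exfalso
        apply hji
        apply hiu j
        rw [← hjx]
        exact hkj ▸ hkx
    · push_neg at hb
      exact ⟨0, fun x hx => by rw [hb x hx]⟩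
  obtain ⟨i, hi⟩ := key
  exact aux_line A hA a i hi
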